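/- Let t be a homogeneous term in r variables with gcd(t) = 1 and let c ≥ 0. Every DFA representing the set {a ∈ ℤ^r : t[a] > c} has at least ||t||^− + ||t||^+ states. -/

import Mathlib

namespace Presburger

/-- A letter of the alphabet `Σ^r`, where `Σ = {0, …, ρ-1}`. -/
abbrev Letter (ρ r : ℕ) := Fin r → Fin ρ

/-- The natural number encoded by a word over `Σ` (most significant digit first). -/
def natVal (ρ : ℕ) (w : List ℕ) : ℕ := w.foldl (fun acc b => ρ * acc + b) 0

/-- The integer encoded by a nonempty word over `Σ` (ρ's complement,
most significant digit first); the empty word gets the junk value `0`. -/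
def intVal (ρ : ℕ) : List ℕ → ℤ
  | [] => 0
  | b :: u => (natVal ρ u : ℤ) - (if b = 0 then 0 else (ρ : ℤ) ^ u.length)

/-- The tuple of natural numbers encoded track-wise by a word over `Σ^r` (as integers). -/
def natVec (ρ r : ℕ) (w : List (Letter ρ r)) : Fin r → ℤ :=
  fun i => (natVal ρ (w.map fun b => (b i : ℕ)) : ℤ)

/-- The tuple of integers encoded track-wise by a nonempty word over `Σ^r`. -/
def intVec (ρ r : ℕ) (w : List (Letter ρ r)) : Fin r → ℤ :=
  fun i => intVal ρ (w.map fun b => (b i : ℕ))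

/-- A language over `Σ^r` represents a set `U ⊆ ℤ^r` if it consists exactly of the
nonempty words encoding a member of `U`. -/
def Represents (ρ r : ℕ) (L : Language (Letter ρ r)) (U : Set (Fin r → ℤ)) : Prop :=
  ∀ w : List (Letter ρ r), w ∈ L ↔ (w ≠ [] ∧ intVec ρ r w ∈ U)

/-- A DFA represents `U ⊆ ℤ^r` if its accepted language does. -/
def DFARepresents (ρ r : ℕ) {σ : Type*} (M : DFA (Letter ρ r) σ) (U : Set (Fin r → ℤ)) : Prop :=
  Represents ρ r M.accepts U

/-- Value of the homogeneous term with coefficients `k` at the point `a`. -/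
def tval {r : ℕ} (k : Fin r → ℤ) (a : Fin r → ℤ) : ℤ := ∑ i, k i * a i

/-- A homogeneous term is `0` or has all its coefficients nonzero. -/
def Homog {r : ℕ} (k : Fin r → ℤ) : Prop := k = 0 ∨ ∀ i, k i ≠ 0

/-- `σ(b)`: componentwise `0` if the digit is `0` and `-1` otherwise. -/
def sgnLetter {ρ r : ℕ} (b : Letter ρ r) : Fin r → ℤ :=
  fun i => if (b i : ℕ) = 0 then 0 else -1

/-- The letter `b` viewed as a tuple of integers. -/
def letterInt {ρ r : ℕ} (b : Letter ρ r) : Fin r → ℤ := fun i => ((b i : ℕ) : ℤ)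

/-- `‖t‖⁺`: the sum of the positive coefficients of `t`. -/
def posNorm {r : ℕ} (k : Fin r → ℤ) : ℤ := ∑ i, max (k i) 0

/-- `‖t‖⁻`: the sum of the absolute values of the negative coefficients of `t`. -/
def negNorm {r : ℕ} (k : Fin r → ℤ) : ℤ := ∑ i, max (-k i) 0

/-- `gcd(t)`: the gcd of the absolute values of the coefficients of `t`. -/
def gcdT {r : ℕ} (k : Fin r → ℤ) : ℕ := Finset.univ.gcd fun i => (k i).natAbs

/-- The transition function `η` of the infinite-state automaton for `t`,
restricted to the integer states: `η(q, b) = ρ·q + t[b]`. -/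
def etaStep (ρ : ℕ) {r : ℕ} (k : Fin r → ℤ) (q : ℤ) (b : Letter ρ r) : ℤ :=
  ρ * q + tval k (letterInt b)

/-- The transition of `η` out of the initial state: `η(q_I, b) = t[σ(b)]`. -/
def etaInit (ρ : ℕ) {r : ℕ} (k : Fin r → ℤ) (b : Letter ρ r) : ℤ :=
  tval k (sgnLetter b)

/-- A state `q` is small (for `t ⋈ c`) if `q < min{c, -‖t‖⁺}`. -/
def IsSmall {r : ℕ} (k : Fin r → ℤ) (c q : ℤ) : Prop := q < min c (-posNorm k)

/-- A state `q` is large (for `t ⋈ c`) if `q > max{c, ‖t‖⁻}`. -/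
def IsLarge {r : ℕ} (k : Fin r → ℤ) (c q : ℤ) : Prop := max c (negNorm k) < q

/-- The six relations `=, ≠, <, ≤, >, ≥` on `ℤ`. -/
def rel6 : Set (ℤ → ℤ → Prop) :=
  {fun x y => x = y, fun x y => x ≠ y, fun x y => x < y,
   fun x y => x ≤ y, fun x y => x > y, fun x y => x ≥ y}

/-- Clamp an integer into the state set `{m, …, n}`; yields `none` (the initial state)
only in the degenerate case `m > n`, which never occurs for small `m` and large `n`. -/
noncomputable def clampSt (m n x : ℤ) : Option ↥(Finset.Icc m n) :=
  if h : max m (min n x) ∈ Finset.Icc m n then some ⟨max m (min n x), h⟩ else none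

/-- The DFA `A^{t ⋈ c}_{(m,n)}` for the (in)equation `t ⋈ c`: states are
`q_I = none` together with `{m, …, n}`, transitions clamp `η` to `[m, n]`, and the
accepting states are the integer states `q` with `q ⋈ c`. -/
noncomputable def ineqDFA (ρ : ℕ) {r : ℕ} (k : Fin r → ℤ) (m n : ℤ) (rel : ℤ → ℤ → Prop) (c : ℤ) :
    DFA (Letter ρ r) (Option ↥(Finset.Icc m n)) where
  step q b :=
    match q with
    | none => clampSt m n (etaInit ρ k b)
    | some z => clampSt m n (etaStep ρ k z.val b)
  start := none
  accept := {q | ∃ z : ↥(Finset.Icc m n), q = some z ∧ rel z.val c}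

/-- Two states of a DFA are equivalent if they accept exactly the same words. -/
def stEquiv {α : Type*} {σ : Type*} (M : DFA α σ) (p q : σ) : Prop :=
  ∀ w : List α, (M.evalFrom p w ∈ M.accept ↔ M.evalFrom q w ∈ M.accept)

end Presburger
namespace Presburger

lemma foldl_digits (ρ : ℕ) (w : List ℕ) (a : ℕ) :
    w.foldl (fun acc b => ρ * acc + b) a = ρ ^ w.length * a + natVal ρ w := by
  induction w generalizing a with
  | nil => simp [natVal]
  | cons b u ih =>
    simp only [natVal, List.foldl_cons, List.length_cons]
    rw [ih (ρ * a + b), ih (ρ * 0 + b)]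
    ring

lemma natVal_cons (ρ : ℕ) (b : ℕ) (u : List ℕ) :
    natVal ρ (b :: u) = ρ ^ u.length * b + natVal ρ u := by
  simp only [natVal, List.foldl_cons]
  simpa [natVal] using foldl_digits ρ u b

lemma natVal_append (ρ : ℕ) (x y : List ℕ) :
    natVal ρ (x ++ y) = ρ ^ y.length * natVal ρ x + natVal ρ y := by
  simp only [natVal, List.foldl_append]
  exact foldl_digits ρ y _

lemma intVal_append (ρ : ℕ) (b : ℕ) (v u : List ℕ) :
    intVal ρ ((b :: v) ++ u) = (ρ : ℤ) ^ u.length * intVal ρ (b :: v) + natVal ρ u := by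
  simp only [List.cons_append, intVal, natVal_append, List.length_append]
  push_cast
  split <;> ring

lemma intVec_append (ρ r : ℕ) (b : Letter ρ r) (v u : List (Letter ρ r)) (i : Fin r) :
    intVec ρ r ((b :: v) ++ u) i
      = (ρ : ℤ) ^ u.length * intVec ρ r (b :: v) i + natVec ρ r u i := by
  simp only [intVec, natVec, List.map_append, List.map_cons]
  rw [show ((b i : ℕ) :: List.map (fun b => (b i : ℕ)) v) ++ List.map (fun b => (b i : ℕ)) u
      = ((b i : ℕ) :: List.map (fun b => (b i : ℕ)) v) ++ List.map (fun b => (b i : ℕ)) u from rfl,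
    intVal_append]
  simp [List.length_map]

end Presburger
namespace Presburger

def digitWord (ρ r : ℕ) (hρ : 0 < ρ) : (n : ℕ) → (Fin r → ℕ) → List (Letter ρ r)
  | 0, _ => []
  | n+1, x => (fun i => ⟨x i / ρ ^ n % ρ, Nat.mod_lt _ hρ⟩) ::
      digitWord ρ r hρ n (fun i => x i % ρ ^ n)

lemma digitWord_length (ρ r : ℕ) (hρ : 0 < ρ) (n : ℕ) (x : Fin r → ℕ) :
    (digitWord ρ r hρ n x).length = n := by
  induction n generalizing x with
  | zero => rfl
  | succ n ih => simp [digitWord, ih]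

lemma natVal_digitWord (ρ r : ℕ) (hρ : 0 < ρ) (n : ℕ) (x : Fin r → ℕ) (i : Fin r)
    (hx : x i < ρ ^ n) :
    natVal ρ ((digitWord ρ r hρ n x).map fun b => (b i : ℕ)) = x i := by
  induction n generalizing x with
  | zero =>
    have : x i = 0 := by simpa using hx
    simp [digitWord, natVal, this]
  | succ n ih =>
    have hpow : 0 < ρ ^ n := Nat.pow_pos hρ
    simp only [digitWord, List.map_cons, natVal_cons, List.length_map, digitWord_length]
    rw [ih (fun i => x i % ρ ^ n) (Nat.mod_lt _ hpow)]
    have hdiv : x i / ρ ^ n < ρ := by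
      rw [Nat.div_lt_iff_lt_mul hpow]
      calc x i < ρ ^ (n+1) := hx
        _ = ρ * ρ ^ n := by ring
    rw [Nat.mod_eq_of_lt hdiv]
    exact Nat.div_add_mod (x i) (ρ ^ n)

def intWord (ρ r : ℕ) (hρ : 1 < ρ) (n : ℕ) (a : Fin r → ℤ) : List (Letter ρ r) :=
  (fun i => if a i < 0 then (⟨1, hρ⟩ : Fin ρ) else ⟨0, by omega⟩) ::
    digitWord ρ r (by omega) n
      (fun i => (a i + if a i < 0 then ((ρ : ℤ)) ^ n else 0).toNat)

lemma intVec_intWord (ρ r : ℕ) (hρ : 1 < ρ) (n : ℕ) (a : Fin r → ℤ)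
    (h : ∀ i, -(ρ : ℤ) ^ n ≤ a i ∧ a i < (ρ : ℤ) ^ n) (i : Fin r) :
    intVec ρ r (intWord ρ r hρ n a) i = a i := by
  have hpow : ((ρ : ℤ)) ^ n = ((ρ ^ n : ℕ) : ℤ) := by push_cast; ring
  have hm : (fun i => (a i + if a i < 0 then ((ρ : ℤ)) ^ n else 0).toNat) i < ρ ^ n := by
    rcases h i with ⟨h1, h2⟩
    simp only
    rw [hpow] at h1 h2 ⊢
    split <;> omega
  have hnv := natVal_digitWord ρ r (show (0:ℕ) < ρ by omega) n
    (fun i => (a i + if a i < 0 then ((ρ : ℤ)) ^ n else 0).toNat) i hm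
  simp only [intVec, intWord, List.map_cons, intVal]
  rw [hnv]
  simp only [List.length_map, digitWord_length, apply_ite (Fin.val : Fin ρ → ℕ)]
  rcases h i with ⟨h1, h2⟩
  rw [hpow] at h1 h2 ⊢
  clear hm hnv
  split_ifs with hA hB
  · exact hB.elim
  · omega
  · omega
  · omega

lemma posNorm_nonneg {r : ℕ} (k : Fin r → ℤ) : 0 ≤ posNorm k :=
  Finset.sum_nonneg fun i _ => le_max_right _ _

lemma negNorm_nonneg {r : ℕ} (k : Fin r → ℤ) : 0 ≤ negNorm k :=
  Finset.sum_nonneg fun i _ => le_max_right _ _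

lemma exists_tval_eq {r : ℕ} (k : Fin r → ℤ) (hgcd : gcdT k = 1) (q : ℤ) :
    ∃ a : Fin r → ℤ, tval k a = q := by
  classical
  let φ : (Fin r → ℤ) →+ ℤ :=
    { toFun := tval k
      map_zero' := by simp [tval]
      map_add' := by intro a b; simp [tval, mul_add, Finset.sum_add_distrib] }
  obtain ⟨g, hg⟩ := Int.subgroup_cyclic φ.range
  have hki : ∀ i, g ∣ k i := by
    intro i
    have hmem : k i ∈ φ.range := by
      refine ⟨Pi.single i 1, ?_⟩
      show tval k (Pi.single i 1) = k i
      simp [tval, Pi.single_apply, mul_ite]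
    rw [hg, AddSubgroup.mem_closure_singleton] at hmem
    obtain ⟨m, hm⟩ := hmem
    exact ⟨m, by rw [← hm]; rw [smul_eq_mul]; ring⟩
  have h1 : g.natAbs ∣ 1 := by
    rw [← hgcd]
    exact Finset.dvd_gcd fun i _ => Int.natAbs_dvd_natAbs.mpr (hki i)
  have hg2 : g * g = 1 := by
    have h2 : g.natAbs = 1 := Nat.dvd_one.mp h1
    rcases Int.natAbs_eq g with h | h <;> rw [h2] at h <;> rw [h] <;> norm_num
  have hmem : q ∈ φ.range := by
    rw [hg, AddSubgroup.mem_closure_singleton]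
    exact ⟨q * g, by rw [smul_eq_mul]; linear_combination q * hg2⟩
  obtain ⟨a, ha⟩ := hmem
  exact ⟨a, ha⟩

lemma sum_if_neg {r : ℕ} (k : Fin r → ℤ) (v : ℤ) (hv : 0 ≤ v) :
    ∑ i, k i * (((if k i < 0 then v.toNat else 0) : ℕ) : ℤ) = -(negNorm k * v) := by
  calc ∑ i, k i * (((if k i < 0 then v.toNat else 0) : ℕ) : ℤ)
      = ∑ i, -(max (-k i) 0 * v) := by
        refine Finset.sum_congr rfl fun i _ => ?_
        rcases lt_or_ge (k i) 0 with h | h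
        · rw [if_pos h, max_eq_left (by omega : (0:ℤ) ≤ -k i), Int.toNat_of_nonneg hv]
          ring
        · rw [if_neg (not_lt.mpr h), max_eq_right (by omega : -k i ≤ (0:ℤ))]
          simp
    _ = -(negNorm k * v) := by
        rw [Finset.sum_neg_distrib, ← Finset.sum_mul, negNorm]

lemma sum_if_pos {r : ℕ} (k : Fin r → ℤ) (v : ℤ) (hv : 0 ≤ v) :
    ∑ i, k i * (((if 0 < k i then v.toNat else 0) : ℕ) : ℤ) = posNorm k * v := by
  calc ∑ i, k i * (((if 0 < k i then v.toNat else 0) : ℕ) : ℤ)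
      = ∑ i, max (k i) 0 * v := by
        refine Finset.sum_congr rfl fun i _ => ?_
        rcases lt_or_ge 0 (k i) with h | h
        · rw [if_pos h, max_eq_left (by omega : (0:ℤ) ≤ k i), Int.toNat_of_nonneg hv]
        · rw [if_neg (not_lt.mpr h), max_eq_right h]
          simp
    _ = posNorm k * v := by rw [← Finset.sum_mul, posNorm]

lemma distinguish (ρ : ℕ) (hρ : 2 ≤ ρ) {r : ℕ} (k : Fin r → ℤ) (c : ℤ) (hc : 0 ≤ c)
    {q q' : ℤ} (hq : -posNorm k ≤ q) (hq' : q' ≤ negNorm k - 1) (hlt : q < q') :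
    ∃ (L : ℕ) (x : Fin r → ℕ), (∀ i, ((x i : ℕ) : ℤ) < (ρ : ℤ) ^ L) ∧
      (ρ : ℤ) ^ L * q + (∑ i, k i * ((x i : ℕ) : ℤ)) ≤ c ∧
      c < (ρ : ℤ) ^ L * q' + (∑ i, k i * ((x i : ℕ) : ℤ)) := by
  have hP : 0 ≤ posNorm k := posNorm_nonneg k
  have hN : 0 ≤ negNorm k := negNorm_nonneg k
  obtain ⟨L, hL⟩ := pow_unbounded_of_one_lt (c + 2 * negNorm k + 2 * posNorm k + 2)
    (show (1:ℤ) < (ρ:ℤ) by exact_mod_cast hρ)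
  set P := posNorm k with hPdef
  set N := negNorm k with hNdef
  set b := (ρ : ℤ) ^ L with hbdef
  have hb0 : 0 < b := by positivity
  have h1 : b * q + b ≤ b * q' := by
    have h := mul_le_mul_of_nonneg_left (by omega : q + 1 ≤ q') hb0.le
    nlinarith [h]
  rcases le_or_gt 1 q' with hcase | hcase
  · -- Case A : 1 ≤ q', use multiples of -N
    have hN2 : 2 ≤ N := by omega
    set e := b * q - c + N - 1 with hedef
    set q0 := e / N with hq0def
    have hmod := Int.mul_ediv_add_emod e N
    have hr0 : 0 ≤ e % N := Int.emod_nonneg e (by omega)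
    have hr1 : e % N < N := Int.emod_lt_of_pos e (by omega)
    set v := max 0 q0 with hvdef
    have hv0 : 0 ≤ v := le_max_left 0 q0
    have hbq_ub : b * q ≤ b * N - 2 * b := by
      have h := mul_le_mul_of_nonneg_left (by omega : q ≤ N - 2) hb0.le
      nlinarith [h]
    have hNv_lb : b * q - c ≤ N * v := by
      rcases le_or_gt 0 q0 with h0 | h0
      · rw [hvdef, max_eq_right h0]
        linarith
      · rw [hvdef, max_eq_left h0.le]
        have hNq0 : N * q0 ≤ N * (-1) := mul_le_mul_of_nonneg_left (by omega) hN
        linarith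
    have hNv_ub : N * v < b * q' - c := by
      rcases le_or_gt 0 q0 with h0 | h0
      · rw [hvdef, max_eq_right h0]
        linarith
      · rw [hvdef, max_eq_left h0.le]
        have h := mul_le_mul_of_nonneg_left (by omega : (1:ℤ) ≤ q') hb0.le
        nlinarith [h]
    have hvb : v < b := by
      by_contra hcon
      push_neg at hcon
      have h2 : N * b ≤ N * v := mul_le_mul_of_nonneg_left hcon hN
      have h3 : b * q' ≤ b * N - b := by
        have h := mul_le_mul_of_nonneg_left (by omega : q' ≤ N - 1) hb0.le
        nlinarith [h]
      nlinarith [h2, h3, hNv_ub]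
    refine ⟨L, fun i => if k i < 0 then v.toNat else 0, ?_, ?_, ?_⟩
    · intro i
      have hcast : ((if k i < 0 then v.toNat else 0 : ℕ) : ℤ) ≤ v := by
        split
        · exact le_of_eq (Int.toNat_of_nonneg hv0)
        · exact_mod_cast hv0
      calc ((if k i < 0 then v.toNat else 0 : ℕ) : ℤ) ≤ v := hcast
        _ < b := hvb
    · rw [sum_if_neg k v hv0]
      linarith
    · rw [sum_if_neg k v hv0]
      linarith
  · -- Case B : q' ≤ 0, use multiples of P
    have hq1 : q ≤ -1 := by omega
    have hP1 : 1 ≤ P := by omega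
    set e := c - b * q' with hedef
    set q0 := e / P with hq0def
    have hmod := Int.mul_ediv_add_emod e P
    have hr0 : 0 ≤ e % P := Int.emod_nonneg e (by omega)
    have hr1 : e % P < P := Int.emod_lt_of_pos e (by omega)
    set v := q0 + 1 with hvdef
    have hPv : P * v = e - e % P + P := by
      have h : P * v = P * q0 + P := by rw [hvdef]; ring
      linarith
    have hbq'0 : b * q' ≤ 0 := mul_nonpos_of_nonneg_of_nonpos hb0.le (by omega)
    have he0 : 0 ≤ e := by linarith
    have hv1 : 1 ≤ v := by
      by_contra hcon
      push_neg at hcon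
      have h : P * v ≤ P * 0 := mul_le_mul_of_nonneg_left (by omega) hP
      linarith
    have hvb : v < b := by
      by_contra hcon
      push_neg at hcon
      have h2 : P * b ≤ P * v := mul_le_mul_of_nonneg_left hcon hP
      have h3 : b * (-P + 1) ≤ b * q' := mul_le_mul_of_nonneg_left (by omega : -P + 1 ≤ q') hb0.le
      nlinarith [h2, h3, hPv]
    refine ⟨L, fun i => if 0 < k i then v.toNat else 0, ?_, ?_, ?_⟩
    · intro i
      have hcast : ((if 0 < k i then v.toNat else 0 : ℕ) : ℤ) ≤ v := by
        split
        · exact le_of_eq (Int.toNat_of_nonneg (by omega))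
        · exact_mod_cast (by omega : (0:ℤ) ≤ v)
      calc ((if 0 < k i then v.toNat else 0 : ℕ) : ℤ) ≤ v := hcast
        _ < b := hvb
    · rw [sum_if_pos k v (by omega)]
      linarith
    · rw [sum_if_pos k v (by omega)]
      linarith

lemma tval_intVec_append (ρ r : ℕ) (k : Fin r → ℤ) (w u : List (Letter ρ r)) (hw : w ≠ []) :
    tval k (intVec ρ r (w ++ u))
      = (ρ : ℤ) ^ u.length * tval k (intVec ρ r w) + ∑ i, k i * natVec ρ r u i := by
  cases w with
  | nil => exact absurd rfl hw
  | cons bb v =>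
    simp only [tval]
    calc ∑ i, k i * intVec ρ r ((bb :: v) ++ u) i
        = ∑ i, ((ρ : ℤ) ^ u.length * (k i * intVec ρ r (bb :: v) i) + k i * natVec ρ r u i) := by
          refine Finset.sum_congr rfl fun i _ => ?_
          rw [intVec_append ρ r bb v u i]
          ring
      _ = _ := by rw [Finset.sum_add_distrib, ← Finset.mul_sum]

end Presburger

namespace Presburger

/-- Every DFA representing `{a ∈ ℤ^r : t[a] > c}` (where `gcd(t) = 1`, `c ≥ 0`)
has at least `‖t‖⁻ + ‖t‖⁺` states. -/
theorem stmt_5 (ρ r : ℕ) (hρ : 2 ≤ ρ) (k : Fin r → ℤ) (hk : Homog k)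
    (hgcd : gcdT k = 1) (c : ℤ) (hc : 0 ≤ c)
    (σ : Type*) [Fintype σ] (M : DFA (Letter ρ r) σ)
    (hM : DFARepresents ρ r M {a | tval k a > c}) :
    negNorm k + posNorm k ≤ (Fintype.card σ : ℤ) := by
  classical
  simp only [DFARepresents, Represents] at hM
  have hρ1 : (1:ℤ) < (ρ:ℤ) := by exact_mod_cast hρ
  have hρ1' : 1 < ρ := by omega
  have hρ0 : 0 < ρ := by omega
  have hP : 0 ≤ posNorm k := posNorm_nonneg k
  have hN : 0 ≤ negNorm k := negNorm_nonneg k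
  -- prefix words realizing each value
  have hpre : ∀ q : ℤ, ∃ w : List (Letter ρ r), w ≠ [] ∧ tval k (intVec ρ r w) = q := by
    intro q
    obtain ⟨a, ha⟩ := exists_tval_eq k hgcd q
    obtain ⟨n, hn⟩ := pow_unbounded_of_one_lt (∑ i, |a i|) hρ1
    have hbound : ∀ i, -(ρ:ℤ)^n ≤ a i ∧ a i < (ρ:ℤ)^n := by
      intro i
      have h1 : |a i| ≤ ∑ j, |a j| :=
        Finset.single_le_sum (fun j _ => abs_nonneg (a j)) (Finset.mem_univ i)
      have h2 : |a i| < (ρ:ℤ)^n := lt_of_le_of_lt h1 hn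
      constructor
      · linarith [neg_abs_le (a i)]
      · linarith [le_abs_self (a i)]
    refine ⟨intWord ρ r hρ1' n a, by simp [intWord], ?_⟩
    have heq : ∀ i, intVec ρ r (intWord ρ r hρ1' n a) i = a i := intVec_intWord ρ r hρ1' n a hbound
    calc tval k (intVec ρ r (intWord ρ r hρ1' n a))
        = tval k a := by
          unfold tval
          exact Finset.sum_congr rfl fun i _ => by rw [heq i]
      _ = q := ha
  choose wq hwne hwval using hpre
  set f : ℤ → σ := fun q => M.eval (wq q) with hfdef
  have key : ∀ q q' : ℤ, -posNorm k ≤ q → q' ≤ negNorm k - 1 → q < q' → f q ≠ f q' := by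
    intro q q' hqlb hq'ub hlt heq
    obtain ⟨L, x, hx, hle, hgt⟩ := distinguish ρ hρ k c hc hqlb hq'ub hlt
    set u := digitWord ρ r hρ0 L x with hudef
    have hulen : u.length = L := digitWord_length ρ r hρ0 L x
    have hnatvec : ∀ i, natVec ρ r u i = ((x i : ℕ) : ℤ) := by
      intro i
      have hpow : ((ρ:ℤ))^L = ((ρ^L : ℕ) : ℤ) := by push_cast; ring
      have hxi : x i < ρ ^ L := by
        have h := hx i
        rw [hpow] at h
        exact_mod_cast h
      simp [natVec, hudef, natVal_digitWord ρ r hρ0 L x i hxi]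
    have hvq : ∀ p : ℤ, tval k (intVec ρ r (wq p ++ u))
        = (ρ:ℤ)^L * p + ∑ i, k i * ((x i : ℕ) : ℤ) := by
      intro p
      rw [tval_intVec_append ρ r k _ u (hwne p), hwval p, hulen]
      congr 1
      exact Finset.sum_congr rfl fun i _ => by rw [hnatvec i]
    have h1 : (wq q ++ u) ∉ M.accepts := by
      rw [hM _]
      rintro ⟨-, habs⟩
      rw [Set.mem_setOf_eq, hvq q] at habs
      linarith
    have h2 : (wq q' ++ u) ∈ M.accepts := by
      rw [hM _]
      refine ⟨by simp [hwne q'], ?_⟩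
      rw [Set.mem_setOf_eq, hvq q']
      exact hgt
    rw [DFA.mem_accepts] at h1 h2
    have e1 : M.eval (wq q ++ u) = M.evalFrom (f q) u := DFA.evalFrom_of_append M M.start _ _
    have e2 : M.eval (wq q' ++ u) = M.evalFrom (f q') u := DFA.evalFrom_of_append M M.start _ _
    rw [e1, heq, ← e2] at h1
    exact h1 h2
  have hinj : Set.InjOn f ((Finset.Icc (-(posNorm k)) (negNorm k - 1) : Finset ℤ) : Set ℤ) := by
    intro a1 h1 a2 h2 he
    rw [Finset.mem_coe, Finset.mem_Icc] at h1 h2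
    by_contra hne
    rcases lt_trichotomy a1 a2 with h | h | h
    · exact key a1 a2 h1.1 h2.2 h he
    · exact hne h
    · exact key a2 a1 h2.1 h1.2 h he.symm
  have hcard := Finset.card_le_card_of_injOn f (fun a _ => Finset.mem_univ (f a)) hinj
  rw [Finset.card_univ, Int.card_Icc] at hcard
  omega

end Presburger
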